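/- Suppose each individual belongs to at most two VR categories and any individual with two memberships has e among them. Then a choice rule satisfies non-wastefulness, no justified envy, compliance with VR protections, and respects mobility from reparatory categories to EWS if and only if it is the sequential choice rule that processes the open category first, category e second, and the remaining VR categories afterwards (in any order). -/

import Mathlib

attribute [local instance] Classical.propDecidable

noncomputable section

variable {ι R : Type*} [Fintype ι] [DecidableEq ι] [Fintype R] [DecidableEq R]

/-- Eligibility sets: everyone is eligible for the open category (`none`),
and `elig c` is the set of members of VR-protected category `c`. -/
def eligOf (elig : R → Finset ι) : Option R → Finset ι
  | none => (Finset.univ : Finset ι)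
  | some c => elig c

/-- Aggregate choice: all individuals chosen across all categories. -/
def aggC (C : Finset ι → Option R → Finset ι) (I : Finset ι) : Finset ι :=
  Finset.univ.biUnion fun v => C I v

/-- `C` is a choice rule for capacities `q` and eligibility `elig`: each category chooses
eligible applicants up to capacity, and no individual is chosen by two categories. -/
def IsChoiceRule (q : Option R → ℕ) (elig : R → Finset ι)
    (C : Finset ι → Option R → Finset ι) : Prop :=
  ∀ I : Finset ι,
    (∀ v, C I v ⊆ I ∩ eligOf elig v) ∧
    (∀ v, (C I v).card ≤ q v) ∧
    (∀ v v', v ≠ v' → Disjoint (C I v) (C I v'))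

/-- Non-wastefulness: no position remains idle while an eligible applicant is unchosen. -/
def NonWasteful (q : Option R → ℕ) (elig : R → Finset ι)
    (C : Finset ι → Option R → Finset ι) : Prop :=
  ∀ (I : Finset ι) (v : Option R) (j : ι),
    j ∈ I → j ∉ aggC C I → (C I v).card < q v → j ∉ eligOf elig v

/-- No justified envy: a chosen individual outscores every eligible entirely-unchosen applicant. -/
def NoJustifiedEnvy (σ : ι → ℝ) (elig : R → Finset ι)
    (C : Finset ι → Option R → Finset ι) : Prop :=
  ∀ (I : Finset ι) (v : Option R) (i j : ι),
    i ∈ C I v → j ∈ I → j ∈ eligOf elig v → j ∉ aggC C I → σ j < σ i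

/-- Compliance with VR protections: a VR recipient implies the open category is full, with
every open-category recipient scoring strictly higher. -/
def CompliesVR (σ : ι → ℝ) (q : Option R → ℕ)
    (C : Finset ι → Option R → Finset ι) : Prop :=
  ∀ (I : Finset ι) (c : R) (i : ι), i ∈ C I (some c) →
    (C I none).card = q none ∧ ∀ j ∈ C I none, σ i < σ j

/-- The (at most) `k` highest merit-score members of `S`. -/
def topK (σ : ι → ℝ) (S : Finset ι) (k : ℕ) : Finset ι :=
  S.filter fun i => (S.filter fun j => σ i ≤ σ j).card ≤ k

/-- The Over-and-Above choice rule: open positions go to the top-merit applicants; then each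
VR category's quota is filled by the highest-merit remaining eligible members. -/
def OA (σ : ι → ℝ) (q : Option R → ℕ) (elig : R → Finset ι)
    (I : Finset ι) : Option R → Finset ι
  | none => topK σ I (q none)
  | some c => topK σ ((I \ topK σ I (q none)) ∩ elig c) (q (some c))

/-- The sequential choice rule: categories are processed in the order given by the list,
each filling its positions by serial dictatorship on the remaining eligible applicants. -/
def seqAssign (σ : ι → ℝ) (q : Option R → ℕ) (elig : R → Finset ι) :
    List (Option R) → Finset ι → Option R → Finset ι
  | [], _, _ => ∅
  | v :: rest, I, u =>
    let chosen := topK σ (I ∩ eligOf elig v) (q v)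
    if u = v then chosen else seqAssign σ q elig rest (I \ chosen) u

/-- Eligibility sets induced by a membership profile `ρ`. -/
def eligρ (ρ : ι → Finset R) (c : R) : Finset ι :=
  Finset.univ.filter fun i => c ∈ ρ i

/-- Respect for mobility from reparatory categories to EWS: if an `e`-eligible individual
receives a position at a caste-based category, then category `e` is full and all of its
recipients have strictly higher merit. -/
def RespectsMobility (σ : ι → ℝ) (q : Option R → ℕ) (elig : R → Finset ι) (e : R)
    (C : Finset ι → Option R → Finset ι) : Prop :=
  ∀ (I : Finset ι) (c : R) (i : ι), c ≠ e → i ∈ C I (some c) → i ∈ elig e →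
    (C I (some e)).card = q (some e) ∧ ∀ j ∈ C I (some e), σ i < σ j

set_option linter.unusedSectionVars false

lemma topK_subset' (σ : ι → ℝ) (S : Finset ι) (k : ℕ) : topK σ S k ⊆ S :=
  Finset.filter_subset _ _

lemma topK_dominates (σ : ι → ℝ) {S : Finset ι} {k : ℕ} {i j : ι}
    (hi : i ∈ S) (hni : i ∉ topK σ S k) (hj : j ∈ topK σ S k) : σ i < σ j := by
  by_contra h
  push_neg at h
  apply hni
  simp only [topK, Finset.mem_filter] at hj ⊢
  refine ⟨hi, le_trans (Finset.card_le_card ?_) hj.2⟩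
  intro x hx
  simp only [Finset.mem_filter] at hx ⊢
  exact ⟨hx.1, le_trans h hx.2⟩

lemma topK_full (σ : ι → ℝ) {S : Finset ι} {k : ℕ} (h : S.card ≤ k) :
    topK σ S k = S := by
  apply Finset.filter_true_of_mem
  intro i hi
  exact le_trans (Finset.card_le_card (Finset.filter_subset _ _)) h

lemma topK_card (σ : ι → ℝ) (hσ : Function.Injective σ) (S : Finset ι) (k : ℕ) :
    (topK σ S k).card = min k S.card := by
  induction S using Finset.strongInduction generalizing k with
  | _ S ih =>
    rcases Nat.eq_zero_or_pos k with rfl | hk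
    · simp only [Nat.zero_min]
      rw [Finset.card_eq_zero]
      ext i
      simp only [topK, Finset.mem_filter, Finset.notMem_empty, iff_false, not_and,
        Nat.le_zero, Finset.card_eq_zero]
      intro hi h
      exact absurd (Finset.eq_empty_iff_forall_notMem.mp h i) (by simp [hi])
    rcases S.eq_empty_or_nonempty with rfl | hS
    · simp [topK]
    obtain ⟨m, hm, hmax⟩ := S.exists_max_image σ hS
    obtain ⟨k', rfl⟩ : ∃ k', k = k' + 1 := ⟨k - 1, by omega⟩
    have hmtop : m ∈ topK σ S (k' + 1) := by
      simp only [topK, Finset.mem_filter]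
      refine ⟨hm, ?_⟩
      have : S.filter (fun j => σ m ≤ σ j) = {m} := by
        ext j
        simp only [Finset.mem_filter, Finset.mem_singleton]
        constructor
        · rintro ⟨hj, hle⟩
          exact hσ (le_antisymm (hmax j hj) hle)
        · rintro rfl; exact ⟨hm, le_refl _⟩
      simp [this]
    have hins : ∀ i ∈ S, S.filter (fun j => σ i ≤ σ j) =
        insert m ((S.erase m).filter (fun j => σ i ≤ σ j)) := by
      intro i hiS
      ext j
      simp only [Finset.mem_filter, Finset.mem_insert, Finset.mem_erase]
      constructor
      · rintro ⟨hj, hle⟩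
        rcases eq_or_ne j m with rfl | hne'
        · exact Or.inl rfl
        · exact Or.inr ⟨⟨hne', hj⟩, hle⟩
      · rintro (rfl | ⟨⟨_, hj⟩, hle⟩)
        · exact ⟨hm, hmax i hiS⟩
        · exact ⟨hj, hle⟩
    have key : topK σ S (k' + 1) = insert m (topK σ (S.erase m) k') := by
      ext i
      simp only [topK, Finset.mem_filter, Finset.mem_insert]
      constructor
      · rintro ⟨hiS, hrk⟩
        rcases eq_or_ne i m with rfl | hne
        · exact Or.inl rfl
        refine Or.inr ⟨Finset.mem_erase.mpr ⟨hne, hiS⟩, ?_⟩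
        rw [hins i hiS, Finset.card_insert_of_notMem (by simp)] at hrk
        omega
      · rintro (rfl | ⟨hi, hrk⟩)
        · exact (Finset.mem_filter.mp hmtop).imp id id
        · have hiS := (Finset.mem_erase.mp hi).2
          refine ⟨hiS, ?_⟩
          rw [hins i hiS, Finset.card_insert_of_notMem (by simp)]
          omega
    have hms : m ∉ topK σ (S.erase m) k' := fun h =>
      (Finset.mem_erase.mp (topK_subset' _ _ _ h)).1 rfl
    rw [key, Finset.card_insert_of_notMem hms,
      ih (S.erase m) (Finset.erase_ssubset hm) k', Finset.card_erase_of_mem hm]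
    have : 1 ≤ S.card := Finset.card_pos.mpr hS
    omega

lemma eq_topK_of_dominates (σ : ι → ℝ) (hσ : Function.Injective σ) {S T : Finset ι} {k : ℕ}
    (hTS : T ⊆ S) (hcard : T.card ≤ k)
    (hdom : ∀ i ∈ S, i ∉ T → ∀ j ∈ T, σ i < σ j)
    (hfull : T.card < k → ∀ x ∈ S, x ∈ T) :
    T = topK σ S k := by
  have hsub : T ⊆ topK σ S k ∨ topK σ S k ⊆ T := by
    by_contra h
    push_neg at h
    obtain ⟨i, hiT, hiT'⟩ := Finset.not_subset.mp h.1
    obtain ⟨j, hjT', hjT⟩ := Finset.not_subset.mp h.2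
    have h1 : σ i < σ j := topK_dominates σ (hTS hiT) hiT' hjT'
    have h2 : σ j < σ i := hdom j (topK_subset' σ S k hjT') hjT i hiT
    linarith
  rcases hsub with hsub | hsub
  · rcases lt_or_eq_of_le (Finset.card_le_card hsub) with hlt | heq
    · have hk : T.card < k := by
        have := topK_card σ hσ S k
        omega
      exact Finset.Subset.antisymm hsub
        (fun x hx => hfull hk x (topK_subset' σ S k hx))
    · exact Finset.eq_of_subset_of_card_le hsub (le_of_eq heq.symm)
  · exact (Finset.eq_of_subset_of_card_le hsub (by
      rw [topK_card σ hσ]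
      exact le_min hcard (Finset.card_le_card hTS))).symm

lemma seq_cons_self (σ : ι → ℝ) (q : Option R → ℕ) (elig : R → Finset ι)
    (v : Option R) (rest : List (Option R)) (I : Finset ι) :
    seqAssign σ q elig (v :: rest) I v = topK σ (I ∩ eligOf elig v) (q v) := by
  simp [seqAssign]

lemma seq_cons_ne (σ : ι → ℝ) (q : Option R → ℕ) (elig : R → Finset ι)
    {u v : Option R} (h : u ≠ v) (rest : List (Option R)) (I : Finset ι) :
    seqAssign σ q elig (v :: rest) I u =
      seqAssign σ q elig rest (I \ topK σ (I ∩ eligOf elig v) (q v)) u := by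
  simp [seqAssign, h]

lemma seq_tail (σ : ι → ℝ) (q : Option R → ℕ) (elig : R → Finset ι) {c : R} :
    ∀ {M : List R}, c ∈ M → (∀ c' ∈ M, c' ≠ c → Disjoint (elig c') (elig c)) →
      ∀ J : Finset ι, seqAssign σ q elig (M.map some) J (some c) =
        topK σ (J ∩ elig c) (q (some c)) := by
  intro M
  induction M with
  | nil => simp
  | cons d rest ih =>
    intro hc hdisj J
    rcases eq_or_ne c d with rfl | hne
    · exact seq_cons_self σ q elig (some c) _ J
    · rw [List.map_cons, seq_cons_ne σ q elig (by simpa using hne) _ J,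
        ih (by simpa [hne] using hc) (fun c' h h' => hdisj c' (List.mem_cons_of_mem _ h) h')]
      congr 1
      have hd : Disjoint (elig d) (elig c) := hdisj d (List.mem_cons_self) (Ne.symm hne)
      ext x
      simp only [Finset.mem_inter, Finset.mem_sdiff]
      constructor
      · rintro ⟨⟨hx, _⟩, hx2⟩; exact ⟨hx, hx2⟩
      · rintro ⟨hx, hx2⟩
        refine ⟨⟨hx, fun hmem => ?_⟩, hx2⟩
        exact (Finset.disjoint_left.mp hd (by
          have := topK_subset' σ (J ∩ eligOf elig (some d)) (q (some d)) hmem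
          exact (Finset.mem_inter.mp this).2)) hx2

lemma seqD_none (σ : ι → ℝ) (q : Option R → ℕ) (elig : R → Finset ι) (e : R)
    (L : List R) (I : Finset ι) :
    seqAssign σ q elig (none :: some e :: L.map some) I none = topK σ I (q none) := by
  rw [seq_cons_self]
  congr 1
  simp [eligOf]

lemma seqD_e (σ : ι → ℝ) (q : Option R → ℕ) (elig : R → Finset ι) (e : R)
    (L : List R) (I : Finset ι) :
    seqAssign σ q elig (none :: some e :: L.map some) I (some e) =
      topK σ ((I \ topK σ I (q none)) ∩ elig e) (q (some e)) := by
  rw [seq_cons_ne σ q elig (by simp) _ I, seq_cons_self]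
  simp [eligOf]

lemma seqD_c (σ : ι → ℝ) (q : Option R → ℕ) (elig : R → Finset ι) (e c : R) (hne : c ≠ e)
    (L : List R) (hc : c ∈ L)
    (hdisj : ∀ c' ∈ L, c' ≠ c → Disjoint (elig c') (elig c)) (I : Finset ι) :
    seqAssign σ q elig (none :: some e :: L.map some) I (some c) =
      topK σ (((I \ topK σ I (q none)) \
        topK σ ((I \ topK σ I (q none)) ∩ elig e) (q (some e))) ∩ elig c) (q (some c)) := by
  rw [seq_cons_ne σ q elig (by simp) _ I,
    seq_cons_ne σ q elig (by simpa using hne) _ _,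
    seq_tail σ q elig hc hdisj]
  simp [eligOf]


theorem ewsFirst_characterization (σ : ι → ℝ) (hσ : Function.Injective σ)
    (q : Option R → ℕ) (e : R) (ρ : ι → Finset R)
    (hρ : ∀ i, (ρ i).card ≤ 2 ∧ ((ρ i).card = 2 → e ∈ ρ i))
    (C : Finset ι → Option R → Finset ι) (hC : IsChoiceRule q (eligρ ρ) C) :
    (NonWasteful q (eligρ ρ) C ∧ NoJustifiedEnvy σ (eligρ ρ) C ∧
        CompliesVR σ q C ∧ RespectsMobility σ q (eligρ ρ) e C) ↔
      ∃ L : List R, L.Nodup ∧ e ∉ L ∧ (∀ c : R, c ≠ e → c ∈ L) ∧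
        C = seqAssign σ q (eligρ ρ) ((none : Option R) :: some e :: L.map some) := by
  have hdisjE : ∀ c c' : R, c ≠ e → c' ≠ e → c' ≠ c →
      Disjoint (eligρ ρ c') (eligρ ρ c) := by
    intro c c' hc hc' hne
    rw [Finset.disjoint_left]
    intro i hi1 hi2
    simp only [eligρ, Finset.mem_filter] at hi1 hi2
    have h1 := (hρ i).1
    have h2 := (hρ i).2
    have hsub : insert c' (insert c {e}) ⊆ ρ i := by
      intro x hx
      simp only [Finset.mem_insert, Finset.mem_singleton] at hx
      rcases hx with rfl | rfl | rfl
      · exact hi1.2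
      · exact hi2.2
      · apply h2
        have hs2 : ({c', c} : Finset R) ⊆ ρ i := by
          intro x hx
          simp only [Finset.mem_insert, Finset.mem_singleton] at hx
          rcases hx with rfl | rfl
          · exact hi1.2
          · exact hi2.2
        have := Finset.card_le_card hs2
        rw [Finset.card_insert_of_notMem (by simpa using hne),
          Finset.card_singleton] at this
        omega
    have := Finset.card_le_card hsub
    rw [Finset.card_insert_of_notMem (by simp [hne, hc']),
      Finset.card_insert_of_notMem (by simp [hc]), Finset.card_singleton] at this
    omega
  constructor
  · rintro ⟨hNW, hNJE, hVR, hRM⟩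
    -- structural characterization of C at each category
    have h0 : ∀ I, C I none = topK σ I (q none) := by
      intro I
      obtain ⟨hsub, hle, hdj⟩ := hC I
      apply eq_topK_of_dominates σ hσ
      · intro x hx
        exact (Finset.mem_inter.mp (hsub none hx)).1
      · exact hle none
      · intro i hiI hi j hj
        by_cases hagg : i ∈ aggC C I
        · simp only [aggC, Finset.mem_biUnion] at hagg
          obtain ⟨v, -, hv⟩ := hagg
          match v with
          | none => exact absurd hv hi
          | some c => exact (hVR I c i hv).2 j hj
        · exact hNJE I none j i hj hiI (Finset.mem_univ i) hagg
      · intro hlt x hxI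
        by_contra hx
        by_cases hagg : x ∈ aggC C I
        · simp only [aggC, Finset.mem_biUnion] at hagg
          obtain ⟨v, -, hv⟩ := hagg
          match v with
          | none => exact hx hv
          | some c => exact absurd (hVR I c x hv).1 (by omega)
        · exact hNW I none x hxI hagg hlt (Finset.mem_univ x)
    have h1 : ∀ I, C I (some e) =
        topK σ ((I \ topK σ I (q none)) ∩ eligρ ρ e) (q (some e)) := by
      intro I
      obtain ⟨hsub, hle, hdj⟩ := hC I
      apply eq_topK_of_dominates σ hσ
      · intro x hx
        have hxe := hsub (some e) hx
        rw [Finset.mem_inter] at hxe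
        refine Finset.mem_inter.mpr ⟨Finset.mem_sdiff.mpr ⟨hxe.1, ?_⟩, hxe.2⟩
        rw [← h0 I]
        exact fun h => Finset.disjoint_left.mp
          (hdj none (some e) (by simp)) h hx
      · exact hle (some e)
      · intro i hiS hi j hj
        rw [Finset.mem_inter, Finset.mem_sdiff, ← h0 I] at hiS
        obtain ⟨⟨hiI, hi0⟩, hie⟩ := hiS
        by_cases hagg : i ∈ aggC C I
        · simp only [aggC, Finset.mem_biUnion] at hagg
          obtain ⟨v, -, hv⟩ := hagg
          match v with
          | none => exact absurd hv hi0
          | some c =>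
            rcases eq_or_ne c e with rfl | hce
            · exact absurd hv hi
            · exact (hRM I c i hce hv hie).2 j hj
        · exact hNJE I (some e) j i hj hiI hie hagg
      · intro hlt x hxS
        rw [Finset.mem_inter, Finset.mem_sdiff, ← h0 I] at hxS
        obtain ⟨⟨hxI, hx0⟩, hxe⟩ := hxS
        by_contra hx
        by_cases hagg : x ∈ aggC C I
        · simp only [aggC, Finset.mem_biUnion] at hagg
          obtain ⟨v, -, hv⟩ := hagg
          match v with
          | none => exact hx0 hv
          | some c =>
            rcases eq_or_ne c e with rfl | hce
            · exact hx hv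
            · exact absurd (hRM I c x hce hv hxe).1 (by omega)
        · exact hNW I (some e) x hxI hagg hlt hxe
    have h2 : ∀ I (c : R), c ≠ e → C I (some c) =
        topK σ (((I \ topK σ I (q none)) \
          topK σ ((I \ topK σ I (q none)) ∩ eligρ ρ e) (q (some e))) ∩ eligρ ρ c)
          (q (some c)) := by
      intro I c hce
      obtain ⟨hsub, hle, hdj⟩ := hC I
      apply eq_topK_of_dominates σ hσ
      · intro x hx
        have hxc := hsub (some c) hx
        rw [Finset.mem_inter] at hxc
        refine Finset.mem_inter.mpr ⟨Finset.mem_sdiff.mpr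
          ⟨Finset.mem_sdiff.mpr ⟨hxc.1, ?_⟩, ?_⟩, hxc.2⟩
        · rw [← h0 I]
          exact fun h => Finset.disjoint_left.mp
            (hdj none (some c) (by simp)) h hx
        · rw [← h1 I]
          exact fun h => Finset.disjoint_left.mp
            (hdj (some e) (some c) (by simp [Ne.symm hce])) h hx
      · exact hle (some c)
      · intro i hiS hi j hj
        rw [Finset.mem_inter, Finset.mem_sdiff, Finset.mem_sdiff,
          ← h1 I, ← h0 I] at hiS
        obtain ⟨⟨⟨hiI, hi0⟩, hi1⟩, hic⟩ := hiS
        by_cases hagg : i ∈ aggC C I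
        · simp only [aggC, Finset.mem_biUnion] at hagg
          obtain ⟨v, -, hv⟩ := hagg
          match v with
          | none => exact absurd hv hi0
          | some c' =>
            rcases eq_or_ne c' e with rfl | hc'e
            · exact absurd hv hi1
            rcases eq_or_ne c' c with rfl | hc'c
            · exact absurd hv hi
            · have hic' := (Finset.mem_inter.mp (hsub (some c') hv)).2
              exact absurd hic (Finset.disjoint_left.mp (hdisjE c c' hce hc'e hc'c) hic')
        · exact hNJE I (some c) j i hj hiI hic hagg
      · intro hlt x hxS
        rw [Finset.mem_inter, Finset.mem_sdiff, Finset.mem_sdiff,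
          ← h1 I, ← h0 I] at hxS
        obtain ⟨⟨⟨hxI, hx0⟩, hx1⟩, hxc⟩ := hxS
        by_contra hx
        by_cases hagg : x ∈ aggC C I
        · simp only [aggC, Finset.mem_biUnion] at hagg
          obtain ⟨v, -, hv⟩ := hagg
          match v with
          | none => exact hx0 hv
          | some c' =>
            rcases eq_or_ne c' e with rfl | hc'e
            · exact hx1 hv
            rcases eq_or_ne c' c with rfl | hc'c
            · exact hx hv
            · have hxc' := (Finset.mem_inter.mp (hsub (some c') hv)).2
              exact absurd hxc (Finset.disjoint_left.mp (hdisjE c c' hce hc'e hc'c) hxc')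
        · exact hNW I (some c) x hxI hagg hlt hxc
    refine ⟨(Finset.univ.erase e).toList, Finset.nodup_toList _, by simp, ?_, ?_⟩
    · intro c hc
      simp [Finset.mem_toList, hc]
    · funext I u
      match u with
      | none => rw [h0 I, seqD_none]
      | some c =>
        rcases eq_or_ne c e with rfl | hce
        · rw [h1 I, seqD_e]
        · rw [h2 I c hce, seqD_c σ q (eligρ ρ) e c hce _
            (by simp [Finset.mem_toList, hce]) ?_ I]
          intro c' hc' hne
          have hc'e : c' ≠ e := by
            rcases Finset.mem_toList.mp hc' with h
            exact (Finset.mem_erase.mp h).1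
          exact hdisjE c c' hce hc'e hne
  · rintro ⟨L, hnd, heL, hall, rfl⟩
    have hD0 : ∀ I : Finset ι,
        seqAssign σ q (eligρ ρ) (none :: some e :: L.map some) I none =
          topK σ I (q none) := fun I => seqD_none σ q (eligρ ρ) e L I
    have hD1 : ∀ I : Finset ι,
        seqAssign σ q (eligρ ρ) (none :: some e :: L.map some) I (some e) =
          topK σ ((I \ topK σ I (q none)) ∩ eligρ ρ e) (q (some e)) :=
      fun I => seqD_e σ q (eligρ ρ) e L I
    have hD2 : ∀ (I : Finset ι) (c : R), c ≠ e →
        seqAssign σ q (eligρ ρ) (none :: some e :: L.map some) I (some c) =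
          topK σ (((I \ topK σ I (q none)) \
            topK σ ((I \ topK σ I (q none)) ∩ eligρ ρ e) (q (some e))) ∩ eligρ ρ c)
            (q (some c)) := by
      intro I c hce
      refine seqD_c σ q (eligρ ρ) e c hce L (hall c hce) ?_ I
      intro c' hc' hne
      exact hdisjE c c' hce (fun h => heL (h ▸ hc')) hne
    refine ⟨?_, ?_, ?_, ?_⟩
    · -- NonWasteful
      intro I v j hjI hjagg hlt hel
      have hjv : ∀ v', j ∉ seqAssign σ q (eligρ ρ) (none :: some e :: L.map some) I v' := by
        intro v' h
        exact hjagg (Finset.mem_biUnion.mpr ⟨v', Finset.mem_univ _, h⟩)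
      obtain _ | c := v
      · apply hjv none
        rw [hD0 I] at hlt ⊢
        have hm := topK_card σ hσ I (q none)
        rw [topK_full σ (show I.card ≤ q none by omega)]
        exact hjI
      · have hj0 : j ∉ topK σ I (q none) := by rw [← hD0 I]; exact hjv none
        rcases eq_or_ne c e with hq | hce
        · subst c
          apply hjv (some e)
          rw [hD1 I] at hlt ⊢
          have hm := topK_card σ hσ ((I \ topK σ I (q none)) ∩ eligρ ρ e) (q (some e))
          rw [topK_full σ (show _ ≤ q (some e) by omega)]
          exact Finset.mem_inter.mpr ⟨Finset.mem_sdiff.mpr ⟨hjI, hj0⟩, hel⟩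
        · have hj1 : j ∉ topK σ ((I \ topK σ I (q none)) ∩ eligρ ρ e) (q (some e)) := by
            rw [← hD1 I]; exact hjv (some e)
          apply hjv (some c)
          rw [hD2 I c hce] at hlt ⊢
          have hm := topK_card σ hσ (((I \ topK σ I (q none)) \
            topK σ ((I \ topK σ I (q none)) ∩ eligρ ρ e) (q (some e))) ∩ eligρ ρ c)
            (q (some c))
          rw [topK_full σ (show _ ≤ q (some c) by omega)]
          exact Finset.mem_inter.mpr ⟨Finset.mem_sdiff.mpr
            ⟨Finset.mem_sdiff.mpr ⟨hjI, hj0⟩, hj1⟩, hel⟩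
    · -- NoJustifiedEnvy
      intro I v i j hi hjI hel hjagg
      have hjv : ∀ v', j ∉ seqAssign σ q (eligρ ρ) (none :: some e :: L.map some) I v' := by
        intro v' h
        exact hjagg (Finset.mem_biUnion.mpr ⟨v', Finset.mem_univ _, h⟩)
      obtain _ | c := v
      · rw [hD0 I] at hi
        exact topK_dominates σ hjI (by rw [← hD0 I]; exact hjv none) hi
      · have hj0 : j ∉ topK σ I (q none) := by rw [← hD0 I]; exact hjv none
        rcases eq_or_ne c e with hq | hce
        · subst c
          replace hel : j ∈ eligρ ρ e := hel
          rw [hD1 I] at hi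
          refine topK_dominates σ
            (Finset.mem_inter.mpr ⟨Finset.mem_sdiff.mpr ⟨hjI, hj0⟩, hel⟩)
            (by rw [← hD1 I]; exact hjv (some e)) hi
        · have hj1 : j ∉ topK σ ((I \ topK σ I (q none)) ∩ eligρ ρ e) (q (some e)) := by
            rw [← hD1 I]; exact hjv (some e)
          replace hel : j ∈ eligρ ρ c := hel
          rw [hD2 I c hce] at hi
          refine topK_dominates σ
            (Finset.mem_inter.mpr ⟨Finset.mem_sdiff.mpr
              ⟨Finset.mem_sdiff.mpr ⟨hjI, hj0⟩, hj1⟩, hel⟩)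
            (by rw [← hD2 I c hce]; exact hjv (some c)) hi
    · -- CompliesVR
      intro I c i hi
      have hiIT0 : i ∈ I ∧ i ∉ topK σ I (q none) := by
        rcases eq_or_ne c e with hq | hce
        · subst c
          rw [hD1 I] at hi
          have := topK_subset' σ _ _ hi
          rw [Finset.mem_inter, Finset.mem_sdiff] at this
          exact ⟨this.1.1, this.1.2⟩
        · rw [hD2 I c hce] at hi
          have := topK_subset' σ _ _ hi
          rw [Finset.mem_inter, Finset.mem_sdiff, Finset.mem_sdiff] at this
          exact ⟨this.1.1.1, this.1.1.2⟩
      constructor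
      · rw [hD0 I]
        rcases le_or_gt (q none) I.card with h | h
        · rw [topK_card σ hσ]
          omega
        · exfalso
          exact hiIT0.2 (by rw [topK_full σ (le_of_lt h)]; exact hiIT0.1)
      · intro j hj
        rw [hD0 I] at hj
        exact topK_dominates σ hiIT0.1 hiIT0.2 hj
    · -- RespectsMobility
      intro I c i hce hi hie
      rw [hD2 I c hce] at hi
      have hiS := topK_subset' σ _ _ hi
      rw [Finset.mem_inter, Finset.mem_sdiff, Finset.mem_sdiff] at hiS
      obtain ⟨⟨⟨hiI, hi0⟩, hi1⟩, hic⟩ := hiS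
      have hiS1 : i ∈ (I \ topK σ I (q none)) ∩ eligρ ρ e :=
        Finset.mem_inter.mpr ⟨Finset.mem_sdiff.mpr ⟨hiI, hi0⟩, hie⟩
      constructor
      · rw [hD1 I]
        rcases le_or_gt (q (some e)) ((I \ topK σ I (q none)) ∩ eligρ ρ e).card with h | h
        · rw [topK_card σ hσ]
          omega
        · exact absurd (by rw [topK_full σ (le_of_lt h)]; exact hiS1) hi1
      · intro j hj
        rw [hD1 I] at hj
        exact topK_dominates σ hiS1 hi1 hj
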